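/- (Radial Sobolev embedding) Let N ≥ 2. There exists C = C(N) > 0 such that for all radially symmetric f ∈ H¹(ℝᴺ) and all x ≠ 0, |x|^{(N-1)/2}|f(x)| ≤ C‖∇f‖^{1/2}_{L²}‖f‖^{1/2}_{L²}. -/

import Mathlib

open MeasureTheory


open MeasureTheory Metric Set
open scoped ENNReal

variable {E : Type*} [NormedAddCommGroup E] [NormedSpace ℝ E] [MeasurableSpace E]
  [BorelSpace E] [FiniteDimensional ℝ E] [Nontrivial E]

lemma my_lintegral_fun_norm_addHaar (μ : Measure E) [μ.IsAddHaarMeasure] {u : ℝ → ℝ≥0∞}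
    (hu : Measurable u) :
    ∫⁻ x, u ‖x‖ ∂μ = μ.toSphere Set.univ *
      ∫⁻ r in Set.Ioi (0:ℝ), ENNReal.ofReal (r ^ (Module.finrank ℝ E - 1)) * u r ∂volume :=
  calc
    ∫⁻ x, u ‖x‖ ∂μ = ∫⁻ x : ({(0)}ᶜ : Set E), u ‖x.1‖ ∂(μ.comap (↑)) := by
      rw [lintegral_subtype_comap (measurableSet_singleton _).compl fun x ↦ u ‖x‖,
        restrict_compl_singleton]
    _ = ∫⁻ p : sphere (0 : E) 1 × Ioi (0 : ℝ), u p.2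
          ∂μ.toSphere.prod (.volumeIoiPow (Module.finrank ℝ E - 1)) :=
      by
        convert (μ.measurePreserving_homeomorphUnitSphereProd.lintegral_comp
          (hu.comp (measurable_subtype_coe.comp measurable_snd))) using 1
        · refine lintegral_congr fun x => ?_
          simp [homeomorphUnitSphereProd]
        · rfl
    _ = μ.toSphere Set.univ * ∫⁻ r : Ioi (0:ℝ), u r ∂(Measure.volumeIoiPow (Module.finrank ℝ E - 1)) := by
      rw [lintegral_prod (fun p : ↑(sphere (0:E) 1) × ↑(Ioi (0:ℝ)) => u ↑p.2) ((hu.comp (measurable_subtype_coe.comp measurable_snd)).aemeasurable)]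
      simp [lintegral_const, mul_comm]
    _ = μ.toSphere Set.univ *
        ∫⁻ r in Set.Ioi (0:ℝ), ENNReal.ofReal (r ^ (Module.finrank ℝ E - 1)) * u r ∂volume := by
      rw [Measure.volumeIoiPow,
        lintegral_withDensity_eq_lintegral_mul _
          ((measurable_subtype_coe.pow_const _).ennreal_ofReal)
          (g := fun r : ↑(Ioi (0:ℝ)) => u ↑r) (hu.comp measurable_subtype_coe)]
      congr 1
      rw [← lintegral_subtype_comap measurableSet_Ioi
        (fun r : ℝ => ENNReal.ofReal (r ^ (Module.finrank ℝ E - 1)) * u r)]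
      rfl

lemma my_integrableOn_polar (μ : Measure E) [μ.IsAddHaarMeasure] {u : ℝ → ℝ}
    (hu : Continuous u) (hu0 : ∀ r, 0 ≤ u r)
    (hint : Integrable (fun x : E => u ‖x‖) μ) :
    IntegrableOn (fun r => r ^ (Module.finrank ℝ E - 1) * u r) (Ioi (0:ℝ)) volume := by
  have hI : ∫⁻ r in Ioi (0:ℝ), ENNReal.ofReal (r ^ (Module.finrank ℝ E - 1)) *
      ENNReal.ofReal (u r) ∂volume < ⊤ := by
    have key := my_lintegral_fun_norm_addHaar μ (u := fun r => ENNReal.ofReal (u r))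
      hu.measurable.ennreal_ofReal
    have hfin : ∫⁻ x, ENNReal.ofReal (u ‖x‖) ∂μ < ⊤ := by
      have := hint.2
      rw [hasFiniteIntegral_def] at this
      refine lt_of_eq_of_lt ?_ this
      refine lintegral_congr fun x => ?_
      rw [← Real.enorm_eq_ofReal (hu0 _)]
    rw [key] at hfin
    have h0 : μ.toSphere univ ≠ 0 := by
      rw [Measure.toSphere_apply_univ]
      exact mul_ne_zero (Nat.cast_ne_zero.2 Module.finrank_pos.ne')
        (measure_ball_pos μ 0 one_pos).ne'
    by_contra h
    rw [not_lt, top_le_iff] at h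
    rw [h, ENNReal.mul_top h0] at hfin
    exact absurd hfin (lt_irrefl _)
  constructor
  · exact ((continuous_pow _).mul hu).aestronglyMeasurable.restrict
  · rw [hasFiniteIntegral_def]
    refine lt_of_eq_of_lt ?_ hI
    refine setLIntegral_congr_fun measurableSet_Ioi (fun r hr => ?_)
    rw [← ENNReal.ofReal_mul (pow_nonneg (le_of_lt hr) _),
      ← Real.enorm_eq_ofReal (mul_nonneg (pow_nonneg (le_of_lt hr) _) (hu0 _))]

lemma my_grad_radial {F : Type*} [NormedAddCommGroup F] [InnerProductSpace ℝ F] [CompleteSpace F]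
    {f : F → ℝ} (hrad : ∀ x y : F, ‖x‖ = ‖y‖ → f x = f y) (hf : ContDiff ℝ 1 f)
    {x y : F} (h : ‖x‖ = ‖y‖) : ‖gradient f x‖ = ‖gradient f y‖ := by
  have hgr : ∀ z : F, ‖gradient f z‖ = ‖fderiv ℝ f z‖ := fun z =>
    (InnerProductSpace.toDual ℝ F).symm.norm_map (fderiv ℝ f z)
  set Q := Submodule.reflection (ℝ ∙ (x - y))ᗮ with hQdef
  have hQx : Q x = y := Submodule.reflection_sub h
  have hcomp : f ∘ Q.toContinuousLinearEquiv = f := funext fun z => by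
    refine hrad _ _ ?_
    rw [LinearIsometryEquiv.coe_toContinuousLinearEquiv]
    exact Q.norm_map z
  have h2 : fderiv ℝ f x = (fderiv ℝ f (Q x)).comp (Q.toContinuousLinearEquiv : F →L[ℝ] F) := by
    conv_lhs => rw [← hcomp]
    rw [Q.toContinuousLinearEquiv.comp_right_fderiv]
    rfl
  have h3 : (Q.toContinuousLinearEquiv : F →L[ℝ] F) = Q.toLinearIsometry.toContinuousLinearMap := by
    ext z; rfl
  rw [hgr, hgr, ← hQx, h2, h3]
  exact ContinuousLinearMap.opNorm_comp_linearIsometryEquiv (fderiv ℝ f (Q x)) Q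

set_option maxHeartbeats 1000000 in
/-- (Strauss) Radial Sobolev embedding: for N ≥ 2 there is C = C(N) such that for all
radial f ∈ H¹(ℝᴺ) and x ≠ 0, |x|^{(N-1)/2}|f(x)| ≤ C‖∇f‖^{1/2}_{L²}‖f‖^{1/2}_{L²}. -/
theorem radial_sobolev_embedding (N : ℕ) (hN : 2 ≤ N) :
    ∃ C > (0 : ℝ), ∀ f : EuclideanSpace ℝ (Fin N) → ℝ,
      (∀ x y, ‖x‖ = ‖y‖ → f x = f y) →
      ContDiff ℝ 1 f →
      MemLp f 2 volume → MemLp (gradient f) 2 volume →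
      ∀ x : EuclideanSpace ℝ (Fin N), x ≠ 0 →
        ‖x‖ ^ (((N : ℝ) - 1) / 2) * |f x|
          ≤ C * (eLpNorm (gradient f) 2 volume).toReal ^ ((1 : ℝ) / 2)
              * (eLpNorm f 2 volume).toReal ^ ((1 : ℝ) / 2) := by
  have hN1 : (1 : ℕ) ≤ N := le_trans (by norm_num) hN
  haveI : Nonempty (Fin N) := ⟨⟨0, by omega⟩⟩
  haveI : Nontrivial (EuclideanSpace ℝ (Fin N)) := by
    refine ⟨0, EuclideanSpace.single ⟨0, by omega⟩ (1:ℝ), ?_⟩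
    intro h
    have := congrArg (fun z => ‖z‖) h
    simp [EuclideanSpace.norm_single] at this
  have hdim : Module.finrank ℝ (EuclideanSpace ℝ (Fin N)) = N := by
    simp [finrank_euclideanSpace]
  set c : ℝ := N * (volume (Metric.ball (0 : EuclideanSpace ℝ (Fin N)) 1)).toReal with hc_def
  have hc : 0 < c := by
    refine mul_pos (by positivity) ?_
    exact ENNReal.toReal_pos (measure_ball_pos _ 0 one_pos).ne' measure_ball_lt_top.ne
  refine ⟨Real.sqrt (2 / c), Real.sqrt_pos.2 (by positivity), ?_⟩
  intro f hrad hf hmf hmg x hx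
  set C := Real.sqrt (2 / c) with hC_def
  -- the direction vector
  set e : EuclideanSpace ℝ (Fin N) := EuclideanSpace.single ⟨0, by omega⟩ (1:ℝ) with he_def
  have he : ‖e‖ = 1 := by simp [he_def]
  set g : ℝ → ℝ := fun r => f (r • e) with hg_def
  set g' : ℝ → ℝ := fun r => fderiv ℝ f (r • e) e with hg'_def
  set φ : ℝ → ℝ := fun r => ‖gradient f (r • e)‖ with hφ_def
  have hfd : Differentiable ℝ f := hf.differentiable one_ne_zero
  have hsm : ∀ r : ℝ, HasDerivAt (fun t : ℝ => t • e) e r := fun r => by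
    simpa using (hasDerivAt_id r).smul_const e
  have hgd : ∀ r, HasDerivAt g (g' r) r := fun r =>
    (hfd (r • e)).hasFDerivAt.comp_hasDerivAt r (hsm r)
  have hsmc : Continuous (fun r : ℝ => r • e) := continuous_id.smul continuous_const
  have hgc : Continuous g := hf.continuous.comp hsmc
  have hfderc : Continuous (fderiv ℝ f) := hf.continuous_fderiv one_ne_zero
  have hg'c : Continuous g' := ((hfderc.comp hsmc).clm_apply continuous_const)
  have hgradc : Continuous (gradient f) := by
    have : gradient f = fun z => (InnerProductSpace.toDual ℝ _).symm (fderiv ℝ f z) := rfl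
    rw [this]
    exact (InnerProductSpace.toDual ℝ _).symm.continuous.comp hfderc
  have hφc : Continuous φ := (hgradc.comp hsmc).norm
  have hgrnorm : ∀ z, ‖gradient f z‖ = ‖fderiv ℝ f z‖ := fun z =>
    (InnerProductSpace.toDual ℝ _).symm.norm_map (fderiv ℝ f z)
  have hg'le : ∀ r, |g' r| ≤ φ r := fun r => by
    have h1 := (fderiv ℝ f (r • e)).le_opNorm e
    rw [he, mul_one] at h1
    calc |g' r| = ‖fderiv ℝ f (r • e) e‖ := (Real.norm_eq_abs _).symm
    _ ≤ ‖fderiv ℝ f (r • e)‖ := h1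
    _ = φ r := (hgrnorm _).symm
  have hnorm_smul : ∀ r : ℝ, 0 ≤ r → ‖r • e‖ = r := fun r hr => by
    rw [norm_smul, he, mul_one, Real.norm_eq_abs, abs_of_nonneg hr]
  have hfg : ∀ z, f z = g ‖z‖ := fun z =>
    hrad z (‖z‖ • e) (hnorm_smul _ (norm_nonneg z)).symm
  have hφg : ∀ z, ‖gradient f z‖ = φ ‖z‖ := fun z =>
    my_grad_radial hrad hf (hnorm_smul _ (norm_nonneg z)).symm
  -- integrability on the Euclidean space
  have hf2 : Integrable (fun z : EuclideanSpace ℝ (Fin N) => (g ‖z‖)^2) volume := by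
    have h1 := hmf.integrable_sq
    exact h1.congr (Filter.Eventually.of_forall fun z => congrArg (· ^ 2) (hfg z))
  have hg2 : Integrable (fun z : EuclideanSpace ℝ (Fin N) => (φ ‖z‖)^2) volume := by
    have h1 := hmg.norm.integrable_sq
    exact h1.congr (Filter.Eventually.of_forall fun z => congrArg (· ^ 2) (hφg z))
  have hIA : IntegrableOn (fun s => s ^ (N-1) * (g s)^2) (Set.Ioi (0:ℝ)) volume := by
    have h1 := my_integrableOn_polar volume (u := fun s => (g s)^2) (hgc.pow 2)
      (fun s => sq_nonneg _) hf2
    rwa [hdim] at h1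
  have hIB : IntegrableOn (fun s => s ^ (N-1) * (φ s)^2) (Set.Ioi (0:ℝ)) volume := by
    have h1 := my_integrableOn_polar volume (u := fun s => (φ s)^2) (hφc.pow 2)
      (fun s => sq_nonneg _) hg2
    rwa [hdim] at h1
  set IA : ℝ := ∫ s in Set.Ioi (0:ℝ), s ^ (N-1) * (g s)^2 with hIA_def
  set IB : ℝ := ∫ s in Set.Ioi (0:ℝ), s ^ (N-1) * (φ s)^2 with hIB_def
  have hIA0 : 0 ≤ IA := setIntegral_nonneg measurableSet_Ioi fun s hs =>
    mul_nonneg (pow_nonneg (le_of_lt hs) _) (sq_nonneg _)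
  have hIB0 : 0 ≤ IB := setIntegral_nonneg measurableSet_Ioi fun s hs =>
    mul_nonneg (pow_nonneg (le_of_lt hs) _) (sq_nonneg _)
  set Sf : ℝ := (eLpNorm f 2 volume).toReal with hSf_def
  set Sg : ℝ := (eLpNorm (gradient f) 2 volume).toReal with hSg_def
  have hSf0 : 0 ≤ Sf := ENNReal.toReal_nonneg
  have hSg0 : 0 ≤ Sg := ENNReal.toReal_nonneg
  -- eLpNorm identities
  have hpolar : ∀ u : ℝ → ℝ, (∫ z : EuclideanSpace ℝ (Fin N), u ‖z‖) =
      c * ∫ s in Set.Ioi (0:ℝ), s ^ (N-1) * u s := by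
    intro u
    rw [integral_fun_norm_addHaar volume u, hdim]
    simp only [nsmul_eq_mul, smul_eq_mul, hc_def]
    rw [mul_assoc]
    rfl
  have hSf2 : Sf ^ 2 = c * IA := by
    have h1 := hmf.eLpNorm_eq_integral_rpow_norm two_ne_zero ENNReal.ofNat_ne_top
    have htr : (2:ℝ≥0∞).toReal = 2 := by norm_num
    rw [htr] at h1
    have h2 : (∫ a : EuclideanSpace ℝ (Fin N), ‖f a‖ ^ (2:ℝ)) = c * IA := by
      have h3 : (fun a : EuclideanSpace ℝ (Fin N) => ‖f a‖ ^ (2:ℝ)) =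
          fun a => (g ‖a‖)^2 := funext fun a => by
        rw [show (2:ℝ) = ((2:ℕ):ℝ) by norm_num, Real.rpow_natCast,
          Real.norm_eq_abs, sq_abs, hfg a]
      rw [h3, hpolar (fun s => (g s)^2)]
    have h4 : 0 ≤ ∫ a : EuclideanSpace ℝ (Fin N), ‖f a‖ ^ (2:ℝ) :=
      integral_nonneg fun a => Real.rpow_nonneg (norm_nonneg _) _
    rw [hSf_def, h1, ENNReal.toReal_ofReal (Real.rpow_nonneg h4 _),
      ← Real.rpow_natCast (_ ^ (2:ℝ)⁻¹) 2, ← Real.rpow_mul h4,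
      show (2:ℝ)⁻¹ * ((2:ℕ):ℝ) = 1 by norm_num, Real.rpow_one]
    exact h2
  have hSg2 : Sg ^ 2 = c * IB := by
    have h1 := hmg.eLpNorm_eq_integral_rpow_norm two_ne_zero ENNReal.ofNat_ne_top
    have htr : (2:ℝ≥0∞).toReal = 2 := by norm_num
    rw [htr] at h1
    have h2 : (∫ a : EuclideanSpace ℝ (Fin N), ‖gradient f a‖ ^ (2:ℝ)) = c * IB := by
      have h3 : (fun a : EuclideanSpace ℝ (Fin N) => ‖gradient f a‖ ^ (2:ℝ)) =
          fun a => (φ ‖a‖)^2 := funext fun a => by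
        rw [show (2:ℝ) = ((2:ℕ):ℝ) by norm_num, Real.rpow_natCast, hφg a]
      rw [h3, hpolar (fun s => (φ s)^2)]
    have h4 : 0 ≤ ∫ a : EuclideanSpace ℝ (Fin N), ‖gradient f a‖ ^ (2:ℝ) :=
      integral_nonneg fun a => Real.rpow_nonneg (norm_nonneg _) _
    rw [hSg_def, h1, ENNReal.toReal_ofReal (Real.rpow_nonneg h4 _),
      ← Real.rpow_natCast (_ ^ (2:ℝ)⁻¹) 2, ← Real.rpow_mul h4,
      show (2:ℝ)⁻¹ * ((2:ℕ):ℝ) = 1 by norm_num, Real.rpow_one]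
    exact h2
  -- the key one-dimensional estimate
  have key : ∀ r0 : ℝ, 0 < r0 → r0 ^ (N-1) * (g r0)^2 ≤ 2 * Real.sqrt IA * Real.sqrt IB := by
    intro r0 hr0
    have step1 : ∀ t : ℝ, 0 < t → r0 ^ (N-1) * (g r0)^2 ≤ t * IA + t⁻¹ * IB := by
      intro t ht
      refine le_of_forall_pos_le_add fun ε hε => ?_
      -- find a large R with small h R
      obtain ⟨R, hrR, hhR⟩ : ∃ R, r0 ≤ R ∧ R ^ (N-1) * (g R)^2 ≤ ε := by
        by_contra hcon
        push_neg at hcon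
        have hIci : IntegrableOn (fun s => s ^ (N-1) * (g s)^2) (Set.Ici r0) volume :=
          hIA.mono_set (fun s hs => lt_of_lt_of_le hr0 hs)
        have hfin := hIci.2
        rw [hasFiniteIntegral_def] at hfin
        have hbig : (⊤:ℝ≥0∞) ≤ ∫⁻ s in Set.Ici r0, ‖s ^ (N-1) * (g s)^2‖₊ ∂volume := by
          have h5 : (⊤:ℝ≥0∞) = ∫⁻ _ in Set.Ici r0, ENNReal.ofReal ε ∂volume := by
            rw [setLIntegral_const, Real.volume_Ici, ENNReal.mul_top
              (by simp [ENNReal.ofReal_eq_zero, not_le, hε])]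
          rw [h5]
          refine setLIntegral_mono (by fun_prop) fun s hs => ?_
          have h6 := (hcon s hs).le
          calc ENNReal.ofReal ε ≤ ENNReal.ofReal (s ^ (N-1) * (g s)^2) :=
                ENNReal.ofReal_le_ofReal h6
            _ = ‖s ^ (N-1) * (g s)^2‖₊ := (Real.enorm_eq_ofReal (le_trans hε.le h6)).symm
        exact absurd (lt_of_le_of_lt hbig hfin) (lt_irrefl ⊤)
      -- FTC on [r0, R]
      set h' : ℝ → ℝ := fun s =>
        ↑(N-1) * s ^ (N-1-1) * (g s)^2 + s ^ (N-1) * (↑2 * g s ^ (2-1) * g' s) with hh'_def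
      have hasD : ∀ s : ℝ, HasDerivAt (fun s => s ^ (N-1) * (g s)^2) (h' s) s := fun s =>
        (hasDerivAt_pow (N-1) s).mul ((hgd s).pow 2)
      have h'cont : Continuous h' := by
        refine Continuous.add ?_ ?_
        · exact (continuous_const.mul (continuous_pow _)).mul (hgc.pow 2)
        · exact (continuous_pow _).mul ((continuous_const.mul (hgc.pow 1)).mul hg'c)
      have hFTC : ∫ s in r0..R, h' s = R ^ (N-1) * (g R)^2 - r0 ^ (N-1) * (g r0)^2 :=
        intervalIntegral.integral_eq_sub_of_hasDerivAt (fun s _ => hasD s)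
          (h'cont.intervalIntegrable _ _)
      set m : ℝ → ℝ := fun s => t * (s ^ (N-1) * (g s)^2) + t⁻¹ * (s ^ (N-1) * (φ s)^2)
        with hm_def
      have hmcont : Continuous m :=
        (continuous_const.mul ((continuous_pow _).mul (hgc.pow 2))).add
          (continuous_const.mul ((continuous_pow _).mul (hφc.pow 2)))
      have hmono : ∫ s in r0..R, (-(m s)) ≤ ∫ s in r0..R, h' s := by
        refine intervalIntegral.integral_mono_on hrR
          (hmcont.neg.intervalIntegrable _ _) (h'cont.intervalIntegrable _ _) fun s hs => ?_
        have hs0 : 0 < s := lt_of_lt_of_le hr0 hs.1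
        have hb2 : (g' s)^2 ≤ (φ s)^2 := by
          have h7 := hg'le s
          nlinarith [abs_nonneg (g' s), sq_abs (g' s)]
        have hP : (0:ℝ) ≤ s ^ (N-1) := pow_nonneg hs0.le _
        have hQ : (0:ℝ) ≤ (↑(N-1):ℝ) * s ^ (N-1-1) * (g s)^2 := by positivity
        have key0 : 0 ≤ t * (s ^ (N-1) * (g s)^2) + t⁻¹ * (s ^ (N-1) * (φ s)^2)
            + s ^ (N-1) * (2 * g s * g' s) := by
          have e1 : t * (s ^ (N-1) * (g s)^2) + t⁻¹ * (s ^ (N-1) * (φ s)^2)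
              + s ^ (N-1) * (2 * g s * g' s)
              = s ^ (N-1) * t⁻¹ * (t * g s + g' s)^2
                + t⁻¹ * s ^ (N-1) * ((φ s)^2 - (g' s)^2) := by
            field_simp
            ring
          rw [e1]
          refine add_nonneg ?_ ?_
          · exact mul_nonneg (mul_nonneg hP (inv_nonneg.2 ht.le)) (sq_nonneg _)
          · exact mul_nonneg (mul_nonneg (inv_nonneg.2 ht.le) hP) (sub_nonneg.2 hb2)
        simp only [hh'_def, hm_def]
        push_cast
        nlinarith [key0, hQ]
      have hJA : ∫ s in Set.Ioc r0 R, s ^ (N-1) * (g s)^2 ≤ IA := by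
        refine setIntegral_mono_set hIA ?_ ?_
        · refine (ae_restrict_iff' measurableSet_Ioi).2 (Filter.Eventually.of_forall
            fun s hs => mul_nonneg (pow_nonneg (le_of_lt hs) _) (sq_nonneg _))
        · exact HasSubset.Subset.eventuallyLE (fun s hs => lt_trans hr0 hs.1)
      have hJB : ∫ s in Set.Ioc r0 R, s ^ (N-1) * (φ s)^2 ≤ IB := by
        refine setIntegral_mono_set hIB ?_ ?_
        · refine (ae_restrict_iff' measurableSet_Ioi).2 (Filter.Eventually.of_forall
            fun s hs => mul_nonneg (pow_nonneg (le_of_lt hs) _) (sq_nonneg _))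
        · exact HasSubset.Subset.eventuallyLE (fun s hs => lt_trans hr0 hs.1)
      have hmval : ∫ s in r0..R, m s =
          t * (∫ s in Set.Ioc r0 R, s ^ (N-1) * (g s)^2)
          + t⁻¹ * (∫ s in Set.Ioc r0 R, s ^ (N-1) * (φ s)^2) := by
        rw [intervalIntegral.integral_of_le hrR, hm_def]
        beta_reduce
        rw [integral_add (f := fun s => t * (s ^ (N-1) * (g s)^2))
          (g := fun s => t⁻¹ * (s ^ (N-1) * (φ s)^2))
          ((show Continuous fun s : ℝ => t * (s ^ (N-1) * (g s)^2) from
            continuous_const.mul ((continuous_pow _).mul (hgc.pow 2))).integrableOn_Ioc)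
          ((show Continuous fun s : ℝ => t⁻¹ * (s ^ (N-1) * (φ s)^2) from
            continuous_const.mul ((continuous_pow _).mul (hφc.pow 2))).integrableOn_Ioc),
          integral_const_mul, integral_const_mul]
      have hneg : ∫ s in r0..R, (-(m s)) = -(∫ s in r0..R, m s) :=
        intervalIntegral.integral_neg
      have hcomb : r0 ^ (N-1) * (g r0)^2 ≤ R ^ (N-1) * (g R)^2 + (t * IA + t⁻¹ * IB) := by
        have h8 : -(t * IA + t⁻¹ * IB) ≤ ∫ s in r0..R, h' s := by
          calc -(t * IA + t⁻¹ * IB) ≤ -(∫ s in r0..R, m s) := by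
                rw [hmval]
                have h8a := mul_le_mul_of_nonneg_left hJA ht.le
                have h8b := mul_le_mul_of_nonneg_left hJB (inv_nonneg.2 ht.le)
                linarith
          _ = ∫ s in r0..R, (-(m s)) := hneg.symm
          _ ≤ ∫ s in r0..R, h' s := hmono
        rw [hFTC] at h8
        linarith
      linarith [hcomb, hhR]
    -- optimize over t
    by_cases hA : IA = 0
    · have h0 : r0 ^ (N-1) * (g r0)^2 ≤ 0 := by
        refine le_of_forall_pos_le_add fun δ hδ => ?_
        have h9 := step1 ((IB + 1)/δ) (by positivity)
        rw [hA, mul_zero] at h9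
        have h10 : ((IB+1)/δ)⁻¹ * IB ≤ δ := by
          rw [inv_div, div_mul_eq_mul_div, div_le_iff₀ (by positivity)]
          nlinarith
        linarith
      have h11 : 0 ≤ 2 * Real.sqrt IA * Real.sqrt IB := by positivity
      linarith
    by_cases hB : IB = 0
    · have h0 : r0 ^ (N-1) * (g r0)^2 ≤ 0 := by
        refine le_of_forall_pos_le_add fun δ hδ => ?_
        have h9 := step1 (δ/(IA + 1)) (by positivity)
        rw [hB, mul_zero] at h9
        have h10 : (δ/(IA+1)) * IA ≤ δ := by
          rw [div_mul_eq_mul_div, div_le_iff₀ (by positivity)]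
          nlinarith
        linarith
      have h11 : 0 ≤ 2 * Real.sqrt IA * Real.sqrt IB := by positivity
      linarith
    have hA' : 0 < IA := lt_of_le_of_ne hIA0 (Ne.symm hA)
    have hB' : 0 < IB := lt_of_le_of_ne hIB0 (Ne.symm hB)
    have ha : 0 < Real.sqrt IA := Real.sqrt_pos.2 hA'
    have hb : 0 < Real.sqrt IB := Real.sqrt_pos.2 hB'
    have ea : Real.sqrt IA * Real.sqrt IA = IA := Real.mul_self_sqrt hIA0
    have eb : Real.sqrt IB * Real.sqrt IB = IB := Real.mul_self_sqrt hIB0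
    have h9 := step1 (Real.sqrt IB / Real.sqrt IA) (by positivity)
    have e2 : (Real.sqrt IB / Real.sqrt IA) * IA + (Real.sqrt IB / Real.sqrt IA)⁻¹ * IB
        = 2 * Real.sqrt IA * Real.sqrt IB := by
      field_simp
      nlinarith [ea, eb]
    linarith
  -- conclude
  have hr0 : 0 < ‖x‖ := norm_pos_iff.2 hx
  have hkey := key ‖x‖ hr0
  have hL : 0 ≤ ‖x‖ ^ (((N:ℝ)-1)/2) * |f x| :=
    mul_nonneg (Real.rpow_nonneg (norm_nonneg x) _) (abs_nonneg _)
  have hRHS : 0 ≤ C * Sg ^ ((1:ℝ)/2) * Sf ^ ((1:ℝ)/2) := by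
    have : 0 ≤ C := Real.sqrt_nonneg _
    positivity
  have hsq : (‖x‖ ^ (((N:ℝ)-1)/2) * |f x|)^2 ≤ (C * Sg ^ ((1:ℝ)/2) * Sf ^ ((1:ℝ)/2))^2 := by
    have e1 : (‖x‖ ^ (((N:ℝ)-1)/2) * |f x|)^2 = ‖x‖ ^ (N-1) * (g ‖x‖)^2 := by
      rw [mul_pow, ← Real.rpow_natCast (‖x‖ ^ (((N:ℝ)-1)/2)) 2,
        ← Real.rpow_mul (norm_nonneg x)]
      rw [show ((N:ℝ)-1)/2 * (2:ℕ) = ((N-1 : ℕ):ℝ) by push_cast [hN1]; ring,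
        Real.rpow_natCast, sq_abs, hfg x]
    have e2 : (C * Sg ^ ((1:ℝ)/2) * Sf ^ ((1:ℝ)/2))^2 = (2/c) * Sg * Sf := by
      rw [mul_pow, mul_pow, hC_def, Real.sq_sqrt (by positivity : (0:ℝ) ≤ 2/c)]
      have e3 : ∀ y : ℝ, 0 ≤ y → (y ^ ((1:ℝ)/2))^2 = y := fun y hy => by
        rw [← Real.rpow_natCast (y ^ ((1:ℝ)/2)) 2, ← Real.rpow_mul hy]
        norm_num
      rw [e3 Sg hSg0, e3 Sf hSf0]
    rw [e1, e2]
    have eA : Real.sqrt IA = Sf / Real.sqrt c := by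
      have : IA = Sf^2 / c := by rw [hSf2]; field_simp
      rw [this, Real.sqrt_div (sq_nonneg Sf), Real.sqrt_sq hSf0]
    have eB : Real.sqrt IB = Sg / Real.sqrt c := by
      have : IB = Sg^2 / c := by rw [hSg2]; field_simp
      rw [this, Real.sqrt_div (sq_nonneg Sg), Real.sqrt_sq hSg0]
    have hcs : Real.sqrt c * Real.sqrt c = c := Real.mul_self_sqrt hc.le
    have e4 : 2 * Real.sqrt IA * Real.sqrt IB = 2/c * Sg * Sf := by
      rw [eA, eB]
      field_simp
      rw [Real.sq_sqrt hc.le]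
      ring
    linarith [hkey, e4.symm.le]
  calc ‖x‖ ^ (((N:ℝ)-1)/2) * |f x|
      = Real.sqrt ((‖x‖ ^ (((N:ℝ)-1)/2) * |f x|)^2) := (Real.sqrt_sq hL).symm
    _ ≤ Real.sqrt ((C * Sg ^ ((1:ℝ)/2) * Sf ^ ((1:ℝ)/2))^2) := Real.sqrt_le_sqrt hsq
    _ = C * Sg ^ ((1:ℝ)/2) * Sf ^ ((1:ℝ)/2) := Real.sqrt_sq hRHS
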